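/- The von Neumann entropy of the normalized Gram matrix of the purification vectors equals the entropy of Bob's conjugate-basis error distribution: for every attack E, the matrix σ indexed by I × I with entries σ_{ij} := 2^{-N} ⟨φ_j, φ_i⟩ is a density matrix whose eigenvalues (with multiplicity) are exactly (p̄(l))_{l ∈ I}; consequently S(σ) = H(A⊕B|b̄) = ∑_{c ∈ I} −p̄(c) log₂ p̄(c). -/

import Mathlib

open scoped ComplexInnerProductSpace ComplexOrder
open Finset

namespace IDT

/-- N-bit strings. -/
abbrev Bits (N : ℕ) := Fin N → ZMod 2

/-- Bitwise dot product `i·k := ∑ n i_n k_n` (lifting bits to naturals). -/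
def bdot {N : ℕ} (i k : Bits N) : ℕ := ∑ n, (i n).val * (k n).val

/-- Eve's attack: unitarity condition on the family of vectors. -/
def Attack {N M : ℕ} (E : Bits N → Bits N → EuclideanSpace ℂ (Fin M)) : Prop :=
  ∀ i k : Bits N, (∑ j : Bits N, ⟪E i j, E k j⟫) = if i = k then 1 else 0

/-- Conjugate-basis vectors `Ē l s := 2^{-N} ∑_{i,j} (-1)^{s·j + i·l} E i j`. -/
noncomputable def Ebar {N M : ℕ} (E : Bits N → Bits N → EuclideanSpace ℂ (Fin M))
    (l s : Bits N) : EuclideanSpace ℂ (Fin M) :=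
  (2 ^ N : ℂ)⁻¹ • ∑ i : Bits N, ∑ j : Bits N, ((-1 : ℂ) ^ (bdot s j + bdot i l)) • E i j

/-- Error distribution of Bob's conjugate-basis outcome. -/
noncomputable def pbar {N M : ℕ} (E : Bits N → Bits N → EuclideanSpace ℂ (Fin M))
    (c : Bits N) : ℝ :=
  (2 ^ N : ℝ)⁻¹ * ∑ i : Bits N, ‖Ebar E i (i + c)‖ ^ 2

/-- `-x log₂ x` (with the convention `0 log₂ 0 = 0`). -/
noncomputable def ent2 (x : ℝ) : ℝ := -(x * Real.logb 2 x)

/-- A POVM on `ℂ^M` with finite outcome set `A`. -/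
structure POVM (A : Type*) [Fintype A] (M : ℕ) where
  X : A → Matrix (Fin M) (Fin M) ℂ
  posSemidef : ∀ a : A, (X a).PosSemidef
  sum_one : ∑ a : A, X a = 1

/-- Eve's outcome probability `p(α|i)`. -/
noncomputable def pOut {N M : ℕ} {A : Type*} [Fintype A]
    (E : Bits N → Bits N → EuclideanSpace ℂ (Fin M)) (P : POVM A M) (a : A) (i : Bits N) : ℝ :=
  (∑ j : Bits N, ⟪E i j, Matrix.toEuclideanLin (P.X a) (E i j)⟫).re

/-- (base-2) Shannon mutual information of a joint distribution. -/
noncomputable def mutualInfo {S T : Type*} [Fintype S] [Fintype T] (p : S → T → ℝ) : ℝ :=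
  (∑ s, ent2 (∑ t, p s t)) + (∑ t, ent2 (∑ s, p s t)) - ∑ s, ∑ t, ent2 (p s t)

/-- Eve's information gain `I(A:E[X]|b)`. -/
noncomputable def infoGain {N M : ℕ} {A : Type*} [Fintype A]
    (E : Bits N → Bits N → EuclideanSpace ℂ (Fin M)) (P : POVM A M) : ℝ :=
  mutualInfo (fun (i : Bits N) (a : A) => (2 ^ N : ℝ)⁻¹ * pOut E P a i)

/-- Elementary tensor of two Euclidean-space vectors. -/
noncomputable def tens {α β : Type*} (u : EuclideanSpace ℂ α) (v : EuclideanSpace ℂ β) :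
    EuclideanSpace ℂ (α × β) :=
  (WithLp.equiv 2 ((α × β) → ℂ)).symm (fun p => u p.1 * v p.2)

/-- Symmetrized attack vectors. -/
noncomputable def Es {N M : ℕ} (E : Bits N → Bits N → EuclideanSpace ℂ (Fin M))
    (i j : Bits N) : EuclideanSpace ℂ (Bits N × Fin M) :=
  (((Real.sqrt (2 ^ N))⁻¹ : ℝ) : ℂ) •
    ∑ m : Bits N, ((-1 : ℂ) ^ bdot m (i + j)) • tens (EuclideanSpace.single m 1) (E (i + m) (j + m))

/-- The operator `|e_m⟩⟨e_m| ⊗ X` as a matrix on `ℂ^{2^N} ⊗ ℂ^M`. -/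
def projTens {N M : ℕ} (m : Bits N) (X : Matrix (Fin M) (Fin M) ℂ) :
    Matrix (Bits N × Fin M) (Bits N × Fin M) ℂ :=
  Matrix.of fun p q => (if p.1 = m ∧ q.1 = m then 1 else 0) * X p.2 q.2

/-- Purification vectors `φ_i`. -/
noncomputable def phi {N M : ℕ} (E : Bits N → Bits N → EuclideanSpace ℂ (Fin M))
    (i : Bits N) : EuclideanSpace ℂ ((Bits N × Fin M) × Bits N) :=
  ∑ j : Bits N, tens (Es E i j) (EuclideanSpace.single (i + j) 1)

/-- Rank-one projection `|ψ⟩⟨ψ|` as a matrix. -/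
noncomputable def outer {α : Type*} (ψ : EuclideanSpace ℂ α) : Matrix α α ℂ :=
  Matrix.of fun x y => ψ x * star (ψ y)

/-- Partial trace over the second tensor factor. -/
noncomputable def ptraceSnd {α β : Type*} [Fintype β] (Θ : Matrix (α × β) (α × β) ℂ) : Matrix α α ℂ :=
  Matrix.of fun i j => ∑ b : β, Θ (i, b) (j, b)

/-- Partial trace over the first tensor factor. -/
noncomputable def ptraceFst {α β : Type*} [Fintype α] (Θ : Matrix (α × β) (α × β) ℂ) : Matrix β β ℂ :=
  Matrix.of fun x y => ∑ a : α, Θ (a, x) (a, y)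

-- von Neumann entropy (base 2) of a Hermitian matrix (junk value `0` otherwise).
open Classical in
noncomputable def vN {n : Type*} [Fintype n] [DecidableEq n] (ρ : Matrix n n ℂ) : ℝ :=
  if h : ρ.IsHermitian then ∑ i, ent2 (h.eigenvalues i) else 0

/-- Classical–quantum state `∑ i p_i |e_i⟩⟨e_i| ⊗ ρ_i`. -/
def cqState {F G : Type*} [DecidableEq F] (p : F → ℝ) (ρ : F → Matrix G G ℂ) :
    Matrix (F × G) (F × G) ℂ :=
  Matrix.of fun x y => if x.1 = y.1 then (p x.1 : ℂ) * ρ x.1 x.2 y.2 else 0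


section Helpers

open scoped Matrix

set_option linter.dupNamespace false

variable {N M : ℕ}

/-! ### Char-2 arithmetic -/

lemma bits_add_self (a : Bits N) : a + a = 0 := funext fun n => by
  have h : ∀ x : ZMod 2, x + x = 0 := by decide
  exact h (a n)

lemma bits_cancel (a b : Bits N) : a + (a + b) = b := by
  rw [← add_assoc, bits_add_self, zero_add]

lemma bits_eq_zero_iff {a b : Bits N} : a + b = 0 ↔ a = b := by
  constructor
  · intro h
    have h2 := congrArg (fun x => a + x) h
    simpa [bits_cancel] using h2.symm
  · rintro rfl; exact bits_add_self a

/-! ### The sign character -/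

/-- sign pairing -/
noncomputable def chi (i j : Bits N) : ℂ := (-1) ^ (bdot i j)

lemma neg_one_pow_congr {a b : ℕ} (h : (a : ZMod 2) = b) : ((-1:ℂ))^a = (-1)^b := by
  have h2 : a % 2 = b % 2 := (ZMod.natCast_eq_natCast_iff' a b 2).mp h
  conv_lhs => rw [← Nat.div_add_mod a 2]
  conv_rhs => rw [← Nat.div_add_mod b 2]
  simp [pow_add, pow_mul, h2]

lemma bdot_cast (i j : Bits N) : ((bdot i j : ℕ) : ZMod 2) = ∑ n, i n * j n := by
  unfold bdot
  push_cast [ZMod.natCast_val, ZMod.cast_id]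
  rfl

lemma chi_comm (i j : Bits N) : chi i j = chi j i := by
  unfold chi bdot
  congr 1
  exact Finset.sum_congr rfl fun n _ => mul_comm _ _

lemma chi_add_right (i j k : Bits N) : chi i (j + k) = chi i j * chi i k := by
  unfold chi
  rw [← pow_add]
  apply neg_one_pow_congr
  push_cast [bdot_cast]
  simp [Pi.add_apply, mul_add, Finset.sum_add_distrib]

lemma chi_add_left (i j k : Bits N) : chi (i + j) k = chi i k * chi j k := by
  rw [chi_comm, chi_add_right, chi_comm k i, chi_comm k j]

lemma chi_mul_self (i j : Bits N) : chi i j * chi i j = 1 := by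
  unfold chi
  rcases Nat.even_or_odd (bdot i j) with h | h
  · simp [h.neg_one_pow]
  · simp [h.neg_one_pow]

lemma chi_zero_right (i : Bits N) : chi i 0 = 1 := by
  unfold chi bdot
  simp

lemma conj_neg_one_pow (n : ℕ) : (starRingEnd ℂ) ((-1:ℂ)^n) = (-1:ℂ)^n := by
  rw [map_pow, map_neg, map_one]

lemma star_chi (i j : Bits N) : (starRingEnd ℂ) (chi i j) = chi i j :=
  conj_neg_one_pow _

lemma sum_chi (v : Bits N) : ∑ i : Bits N, chi i v = if v = 0 then (2^N : ℂ) else 0 := by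
  have h1 : ∀ i : Bits N, chi i v = ∏ n, ((-1:ℂ)) ^ ((i n).val * (v n).val) := by
    intro i
    unfold chi bdot
    rw [Finset.prod_pow_eq_pow_sum]
  rw [Finset.sum_congr rfl fun i _ => h1 i, ← Fintype.piFinset_univ,
    Finset.sum_prod_piFinset (Finset.univ : Finset (ZMod 2))
      (fun n x => ((-1:ℂ)) ^ (x.val * (v n).val))]
  by_cases hv : v = 0
  · subst hv
    simp only [Pi.zero_apply, ZMod.val_zero, mul_zero, pow_zero, if_pos rfl]
    rw [Finset.prod_congr rfl fun n _ => Finset.sum_const 1]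
    simp [Finset.card_univ, ZMod.card]
  · rw [if_neg hv]
    obtain ⟨n, hn⟩ := Function.ne_iff.mp hv
    apply Finset.prod_eq_zero (Finset.mem_univ n)
    have h01 : ∀ x : ZMod 2, x ≠ 0 → x = 1 := by decide
    rw [h01 _ hn]
    have huniv : (Finset.univ : Finset (ZMod 2)) = {0, 1} := by decide
    rw [huniv]
    norm_num [show ((1:ZMod 2)).val = 1 from rfl, show ((0:ZMod 2)).val = 0 from rfl]


/-! ### Inner products of tensors -/

lemma inner_tens {α β : Type*} [Fintype α] [Fintype β]
    (u u' : EuclideanSpace ℂ α) (v v' : EuclideanSpace ℂ β) :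
    ⟪tens u v, tens u' v'⟫ = ⟪u, u'⟫ * ⟪v, v'⟫ := by
  simp only [tens, PiLp.inner_apply, RCLike.inner_apply, WithLp.equiv_symm_apply, PiLp.toLp_apply, map_mul]
  rw [Finset.sum_mul_sum, Fintype.sum_prod_type]
  exact Finset.sum_congr rfl fun a _ => Finset.sum_congr rfl fun b _ => by ring

lemma inner_single_one (m m' : Bits N) :
    ⟪(EuclideanSpace.single m (1:ℂ)), EuclideanSpace.single m' 1⟫ = if m = m' then 1 else 0 := by
  rw [EuclideanSpace.inner_single_left]
  simp [EuclideanSpace.single_apply]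

/-- The basic two-index sesquilinear sum. -/
noncomputable def Sfun (E : Bits N → Bits N → EuclideanSpace ℂ (Fin M)) (u : Bits N) : ℂ :=
  ∑ a : Bits N, ∑ b : Bits N, ⟪E (a + u) (b + u), E a b⟫

lemma inner_Es (E : Bits N → Bits N → EuclideanSpace ℂ (Fin M)) (a b c d : Bits N) :
    ⟪Es E a b, Es E c d⟫ =
      (2^N : ℂ)⁻¹ * ∑ m : Bits N,
        chi m (a + b) * chi m (c + d) * ⟪E (a + m) (b + m), E (c + m) (d + m)⟫ := by
  have hr : ((((Real.sqrt (2 ^ N))⁻¹ : ℝ)) : ℂ) * (((Real.sqrt (2 ^ N))⁻¹ : ℝ) : ℂ)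
      = (2^N : ℂ)⁻¹ := by
    rw [← Complex.ofReal_mul, ← mul_inv, Real.mul_self_sqrt (by positivity)]
    push_cast
    norm_num
  unfold Es
  rw [inner_smul_left, inner_smul_right, Complex.conj_ofReal]
  have hS : ⟪∑ m : Bits N, ((-1:ℂ) ^ bdot m (a+b)) • tens (EuclideanSpace.single m 1) (E (a+m) (b+m)),
      ∑ m' : Bits N, ((-1:ℂ) ^ bdot m' (c+d)) • tens (EuclideanSpace.single m' 1) (E (c+m') (d+m'))⟫
      = ∑ m : Bits N, chi m (a+b) * chi m (c+d) * ⟪E (a + m) (b + m), E (c + m) (d + m)⟫ := by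
    rw [sum_inner]
    refine Finset.sum_congr rfl fun m _ => ?_
    rw [inner_sum, Finset.sum_eq_single m]
    · rw [inner_smul_left, inner_smul_right, inner_tens, inner_single_one, if_pos rfl, one_mul,
        conj_neg_one_pow]
      unfold chi
      ring
    · intro m' _ hne
      rw [inner_smul_left, inner_smul_right, inner_tens, inner_single_one,
        if_neg (fun h => hne h.symm)]
      ring
    · intro h
      exact absurd (Finset.mem_univ m) h
  rw [hS, ← mul_assoc, hr]

lemma phi_inner (E : Bits N → Bits N → EuclideanSpace ℂ (Fin M)) (i j : Bits N) :
    ⟪phi E j, phi E i⟫ = ∑ k : Bits N, ⟪Es E j (j + (i + k)), Es E i k⟫ := by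
  unfold phi
  rw [sum_inner]
  simp only [inner_sum]
  rw [Finset.sum_comm]
  refine Finset.sum_congr rfl fun k _ => ?_
  rw [Finset.sum_eq_single (j + (i + k))]
  · rw [inner_tens, inner_single_one, if_pos (bits_cancel j (i + k)), mul_one]
  · intro k' _ hne
    rw [inner_tens, inner_single_one, if_neg, mul_zero]
    intro hcontra
    apply hne
    have h2 := congrArg (fun x => j + x) hcontra
    simpa [bits_cancel] using h2
  · intro h
    exact absurd (Finset.mem_univ _) h

lemma sigma_entry (E : Bits N → Bits N → EuclideanSpace ℂ (Fin M)) (i j : Bits N) :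
    (2^N : ℂ)⁻¹ * ⟪phi E j, phi E i⟫ = ((2^N : ℂ)^2)⁻¹ * Sfun E (i + j) := by
  rw [phi_inner]
  have h1 : ∀ k : Bits N, ⟪Es E j (j + (i + k)), Es E i k⟫
      = (2^N : ℂ)⁻¹ * ∑ m : Bits N, ⟪E (j + m) ((j + (i + k)) + m), E (i + m) (k + m)⟫ := by
    intro k
    rw [inner_Es]
    congr 1
    refine Finset.sum_congr rfl fun m _ => ?_
    rw [bits_cancel, chi_mul_self, one_mul]
  rw [Finset.sum_congr rfl fun k _ => h1 k, ← Finset.mul_sum, ← mul_assoc,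
    show (2^N : ℂ)⁻¹ * (2^N : ℂ)⁻¹ = ((2^N:ℂ)^2)⁻¹ by rw [← mul_inv, sq]]
  congr 1
  unfold Sfun
  rw [Finset.sum_comm]
  refine (Fintype.sum_equiv (Equiv.addLeft i) _ _ fun a => ?_).symm
  refine Fintype.sum_equiv (Equiv.addRight (i + a)) _ _ fun b => ?_
  simp only [Equiv.coe_addLeft, Equiv.coe_addRight]
  simp [add_assoc, add_comm, add_left_comm, bits_cancel, bits_add_self]


/-! ### The Fourier transform of `Sfun` is `pbar` -/

lemma Sfun_rev (E : Bits N → Bits N → EuclideanSpace ℂ (Fin M)) (u : Bits N) :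
    ∑ a : Bits N, ∑ b : Bits N, ⟪E a b, E (a + u) (b + u)⟫ = Sfun E u := by
  unfold Sfun
  refine Fintype.sum_equiv (Equiv.addRight u) _ _ fun a => ?_
  refine Fintype.sum_equiv (Equiv.addRight u) _ _ fun b => ?_
  simp only [Equiv.coe_addRight]
  simp [add_assoc, add_comm, add_left_comm, bits_cancel, bits_add_self]

lemma inner_Ebar (E : Bits N → Bits N → EuclideanSpace ℂ (Fin M)) (i l : Bits N) :
    ⟪Ebar E i (i + l), Ebar E i (i + l)⟫
      = ((2^N:ℂ)^2)⁻¹ * ∑ p : (Bits N × Bits N) × (Bits N × Bits N),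
          (chi (i+l) p.1.2 * chi p.1.1 i * (chi (i+l) p.2.2 * chi p.2.1 i))
            * ⟪E p.2.1 p.2.2, E p.1.1 p.1.2⟫ := by
  unfold Ebar
  rw [inner_smul_left, inner_smul_right]
  simp only [sum_inner, inner_sum, inner_smul_left, inner_smul_right, conj_neg_one_pow,
    Fintype.sum_prod_type, Finset.mul_sum]
  refine Finset.sum_congr rfl fun a _ => Finset.sum_congr rfl fun b _ =>
    Finset.sum_congr rfl fun a' _ => Finset.sum_congr rfl fun b' _ => ?_
  simp only [map_inv₀, map_pow, map_ofNat]
  unfold chi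
  rw [pow_add, pow_add]
  ring

lemma sum_i_chi (l a b a' b' : Bits N) :
    ∑ i : Bits N, chi (i+l) b * chi a i * (chi (i+l) b' * chi a' i)
      = chi l b * chi l b' * (if a + (a' + (b + b')) = 0 then (2^N:ℂ) else 0) := by
  have h : ∀ i : Bits N, chi (i+l) b * chi a i * (chi (i+l) b' * chi a' i)
      = chi l b * chi l b' * chi i (a + (a' + (b + b'))) := by
    intro i
    rw [chi_add_left, chi_add_left, chi_comm a i, chi_comm a' i,
      chi_add_right, chi_add_right, chi_add_right]
    ring
  rw [Finset.sum_congr rfl fun i _ => h i, ← Finset.mul_sum, sum_chi]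

lemma sum_inner_Ebar (E : Bits N → Bits N → EuclideanSpace ℂ (Fin M)) (l : Bits N) :
    ∑ i : Bits N, ⟪Ebar E i (i + l), Ebar E i (i + l)⟫
      = (2^N:ℂ)⁻¹ * ∑ u : Bits N, chi u l * Sfun E u := by
  have hc : (2^N : ℂ) ≠ 0 := by positivity
  rw [Finset.sum_congr rfl fun i _ => inner_Ebar E i l, ← Finset.mul_sum, Finset.sum_comm]
  have hp : ∀ p : (Bits N × Bits N) × (Bits N × Bits N),
      ∑ i : Bits N, (chi (i+l) p.1.2 * chi p.1.1 i * (chi (i+l) p.2.2 * chi p.2.1 i))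
          * ⟪E p.2.1 p.2.2, E p.1.1 p.1.2⟫
      = (chi l p.1.2 * chi l p.2.2
          * (if p.1.1 + (p.2.1 + (p.1.2 + p.2.2)) = 0 then (2^N:ℂ) else 0))
          * ⟪E p.2.1 p.2.2, E p.1.1 p.1.2⟫ := fun p => by
    rw [← Finset.sum_mul, sum_i_chi]
  rw [Finset.sum_congr rfl fun p _ => hp p]
  simp only [Fintype.sum_prod_type]
  have hcol : ∀ a b : Bits N, (∑ a' : Bits N, ∑ b' : Bits N,
      (chi l b * chi l b' * (if a + (a' + (b + b')) = 0 then (2^N:ℂ) else 0))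
        * ⟪E a' b', E a b⟫)
      = ∑ b' : Bits N, (chi l b * chi l b' * (2^N:ℂ)) * ⟪E (a + (b + b')) b', E a b⟫ := by
    intro a b
    rw [Finset.sum_comm]
    refine Finset.sum_congr rfl fun b' _ => ?_
    rw [Finset.sum_eq_single (a + (b + b'))]
    · rw [if_pos (by simp [add_assoc, add_comm, add_left_comm, bits_cancel, bits_add_self])]
    · intro a'' _ hne
      rw [if_neg, mul_zero, zero_mul]
      intro hcon
      apply hne
      have h2 := bits_eq_zero_iff.mp hcon
      rw [h2]
      simp [add_assoc, add_comm, add_left_comm, bits_cancel, bits_add_self]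
    · intro h
      exact absurd (Finset.mem_univ _) h
  rw [Finset.sum_congr rfl fun a _ => Finset.sum_congr rfl fun b _ => hcol a b]
  have hre : ∀ a b : Bits N, (∑ b' : Bits N,
      (chi l b * chi l b' * (2^N:ℂ)) * ⟪E (a + (b + b')) b', E a b⟫)
      = ∑ u : Bits N, (chi l u * (2^N:ℂ)) * ⟪E (a + u) (b + u), E a b⟫ := by
    intro a b
    refine (Fintype.sum_equiv (Equiv.addLeft b) _ _ fun u => ?_).symm
    simp only [Equiv.coe_addLeft]
    rw [show a + (b + (b + u)) = a + u by rw [bits_cancel], chi_add_right,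
      show chi l b * (chi l b * chi l u) = chi l u by rw [← mul_assoc, chi_mul_self, one_mul]]
  rw [Finset.sum_congr rfl fun a _ => Finset.sum_congr rfl fun b _ => hre a b]
  have swap1 : ∀ a : Bits N, (∑ b : Bits N, ∑ u : Bits N,
      (chi l u * (2^N:ℂ)) * ⟪E (a + u) (b + u), E a b⟫)
      = ∑ u : Bits N, ∑ b : Bits N, (chi l u * (2^N:ℂ)) * ⟪E (a + u) (b + u), E a b⟫ :=
    fun a => Finset.sum_comm
  rw [Finset.sum_congr rfl fun a _ => swap1 a]
  have swap2 : (∑ a : Bits N, ∑ u : Bits N, ∑ b : Bits N,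
      (chi l u * (2^N:ℂ)) * ⟪E (a + u) (b + u), E a b⟫)
      = ∑ u : Bits N, ∑ a : Bits N, ∑ b : Bits N,
      (chi l u * (2^N:ℂ)) * ⟪E (a + u) (b + u), E a b⟫ := Finset.sum_comm
  rw [swap2]
  have hfin : ∀ u : Bits N, (∑ a : Bits N, ∑ b : Bits N,
      (chi l u * (2^N:ℂ)) * ⟪E (a + u) (b + u), E a b⟫)
      = (2^N:ℂ) * (chi u l * Sfun E u) := by
    intro u
    unfold Sfun
    simp only [← Finset.mul_sum]
    rw [chi_comm]
    ring
  rw [Finset.sum_congr rfl fun u _ => hfin u, ← Finset.mul_sum, ← mul_assoc]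
  congr 1
  field_simp

lemma pbar_eq (E : Bits N → Bits N → EuclideanSpace ℂ (Fin M)) (l : Bits N) :
    (pbar E l : ℂ) = ((2^N:ℂ)^2)⁻¹ * ∑ u : Bits N, chi u l * Sfun E u := by
  have hcast : ((pbar E l : ℝ) : ℂ)
      = (2^N:ℂ)⁻¹ * ∑ i : Bits N, ((‖Ebar E i (i + l)‖^2 : ℝ) : ℂ) := by
    unfold pbar
    push_cast
    ring
  rw [hcast]
  have h2 : ∑ i : Bits N, ((‖Ebar E i (i + l)‖^2 : ℝ) : ℂ)
      = ∑ i : Bits N, ⟪Ebar E i (i + l), Ebar E i (i + l)⟫ := by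
    refine Finset.sum_congr rfl fun i _ => ?_
    rw [inner_self_eq_norm_sq_to_K]
    norm_cast
  rw [h2, sum_inner_Ebar, ← mul_assoc, ← mul_inv, ← sq]


/-! ### The Hadamard unitary and diagonalization -/

noncomputable def Umat (N : ℕ) : Matrix (Bits N) (Bits N) ℂ :=
  Matrix.of fun i l => (((Real.sqrt (2 ^ N))⁻¹ : ℝ) : ℂ) * chi i l

lemma star_chi' (i j : Bits N) : star (chi i j) = chi i j := star_chi i j

lemma rc_mul_rc : ((((Real.sqrt (2 ^ N))⁻¹ : ℝ)) : ℂ) * (((Real.sqrt (2 ^ N))⁻¹ : ℝ) : ℂ)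
    = (2^N : ℂ)⁻¹ := by
  rw [← Complex.ofReal_mul, ← mul_inv, Real.mul_self_sqrt (by positivity)]
  push_cast
  norm_num

lemma Umat_mul_conjTranspose : (Umat N) * (Umat N)ᴴ = 1 := by
  ext i i'
  rw [Matrix.mul_apply, Matrix.one_apply]
  have hterm : ∀ l : Bits N, Umat N i l * (Umat N)ᴴ l i' = (2^N:ℂ)⁻¹ * chi l (i + i') := by
    intro l
    rw [Matrix.conjTranspose_apply]
    show ((((Real.sqrt (2 ^ N))⁻¹ : ℝ) : ℂ) * chi i l)
        * star ((((Real.sqrt (2 ^ N))⁻¹ : ℝ) : ℂ) * chi i' l) = _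
    rw [star_mul', star_chi', Complex.star_def, Complex.conj_ofReal]
    rw [show ((((Real.sqrt (2 ^ N))⁻¹ : ℝ) : ℂ) * chi i l)
        * ((((Real.sqrt (2 ^ N))⁻¹ : ℝ) : ℂ) * chi i' l)
        = (((((Real.sqrt (2 ^ N))⁻¹ : ℝ) : ℂ)) * ((((Real.sqrt (2 ^ N))⁻¹ : ℝ) : ℂ)))
          * (chi i l * chi i' l) from by ring, rc_mul_rc,
      show chi i l * chi i' l = chi l (i + i') by rw [← chi_add_left, chi_comm]]
  rw [Finset.sum_congr rfl fun l _ => hterm l, ← Finset.mul_sum, sum_chi]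
  by_cases h : i = i'
  · rw [if_pos h, if_pos (h ▸ bits_add_self i)]
    have hc : (2^N : ℂ) ≠ 0 := by positivity
    field_simp
  · rw [if_neg h, if_neg (fun hc => h (bits_eq_zero_iff.mp hc)), mul_zero]

lemma conjTranspose_mul_Umat : (Umat N)ᴴ * (Umat N) = 1 := by
  ext l l'
  rw [Matrix.mul_apply, Matrix.one_apply]
  have hterm : ∀ i : Bits N, (Umat N)ᴴ l i * Umat N i l' = (2^N:ℂ)⁻¹ * chi i (l + l') := by
    intro i
    rw [Matrix.conjTranspose_apply]
    show star ((((Real.sqrt (2 ^ N))⁻¹ : ℝ) : ℂ) * chi i l)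
        * ((((Real.sqrt (2 ^ N))⁻¹ : ℝ) : ℂ) * chi i l') = _
    rw [star_mul', star_chi', Complex.star_def, Complex.conj_ofReal]
    rw [show ((((Real.sqrt (2 ^ N))⁻¹ : ℝ) : ℂ) * chi i l)
        * ((((Real.sqrt (2 ^ N))⁻¹ : ℝ) : ℂ) * chi i l')
        = (((((Real.sqrt (2 ^ N))⁻¹ : ℝ) : ℂ)) * ((((Real.sqrt (2 ^ N))⁻¹ : ℝ) : ℂ)))
          * (chi i l * chi i l') from by ring, rc_mul_rc, ← chi_add_right]
  rw [Finset.sum_congr rfl fun i _ => hterm i, ← Finset.mul_sum, sum_chi]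
  by_cases h : l = l'
  · rw [if_pos h, if_pos (h ▸ bits_add_self l)]
    have hc : (2^N : ℂ) ≠ 0 := by positivity
    field_simp
  · rw [if_neg h, if_neg (fun hc => h (bits_eq_zero_iff.mp hc)), mul_zero]

noncomputable def Dmat (E : Bits N → Bits N → EuclideanSpace ℂ (Fin M)) :
    Matrix (Bits N) (Bits N) ℂ :=
  Matrix.diagonal fun l => (pbar E l : ℂ)

lemma sigma_decomp (E : Bits N → Bits N → EuclideanSpace ℂ (Fin M))
    (σ : Matrix (Bits N) (Bits N) ℂ)
    (hσ : σ = Matrix.of fun i j : Bits N => (2 ^ N : ℂ)⁻¹ * ⟪phi E j, phi E i⟫) :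
    σ = Umat N * Dmat E * (Umat N)ᴴ := by
  have hmul : σ * Umat N = Umat N * Dmat E := by
    ext i l
    rw [Matrix.mul_apply, Dmat, Matrix.mul_diagonal]
    have h1 : ∀ j, σ i j * Umat N j l = (((2^N:ℂ)^2)⁻¹ * Sfun E (i+j)) * Umat N j l := by
      intro j
      rw [hσ]
      show ((2 ^ N : ℂ)⁻¹ * ⟪phi E j, phi E i⟫) * Umat N j l = _
      rw [sigma_entry]
    rw [Finset.sum_congr rfl fun j _ => h1 j]
    have h2 : ∑ j : Bits N, (((2^N:ℂ)^2)⁻¹ * Sfun E (i+j)) * Umat N j l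
        = ∑ u : Bits N, (((2^N:ℂ)^2)⁻¹ * Sfun E u)
            * ((((Real.sqrt (2 ^ N))⁻¹ : ℝ) : ℂ) * (chi i l * chi u l)) := by
      refine (Fintype.sum_equiv (Equiv.addLeft i) _ _ fun u => ?_).symm
      simp only [Equiv.coe_addLeft]
      rw [show i + (i + u) = u from bits_cancel i u]
      show _ = (((2^N:ℂ)^2)⁻¹ * Sfun E u) * ((((Real.sqrt (2 ^ N))⁻¹ : ℝ) : ℂ) * chi (i+u) l)
      rw [chi_add_left]
    rw [h2]
    have h3 : ∀ u : Bits N, (((2^N:ℂ)^2)⁻¹ * Sfun E u)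
          * ((((Real.sqrt (2 ^ N))⁻¹ : ℝ) : ℂ) * (chi i l * chi u l))
        = ((((Real.sqrt (2 ^ N))⁻¹ : ℝ) : ℂ) * chi i l)
          * (((2^N:ℂ)^2)⁻¹ * (chi u l * Sfun E u)) := fun u => by ring
    rw [Finset.sum_congr rfl fun u _ => h3 u, ← Finset.mul_sum, ← Finset.mul_sum, ← pbar_eq]
    rfl
  calc σ = σ * (Umat N * (Umat N)ᴴ) := by rw [Umat_mul_conjTranspose, mul_one]
  _ = (σ * Umat N) * (Umat N)ᴴ := by rw [mul_assoc]
  _ = Umat N * Dmat E * (Umat N)ᴴ := by rw [hmul]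

/-! ### Characteristic polynomial tools -/

lemma charpoly_conj_eq {n : Type*} [Fintype n] [DecidableEq n] (A U V : Matrix n n ℂ)
    (hUV : U * V = 1) : (U * A * V).charpoly = A.charpoly := by
  have hmapUV : U.map (Polynomial.C) * V.map (Polynomial.C) = 1 := by
    rw [← Matrix.map_mul, hUV, Matrix.map_one _ (map_zero _) (map_one _)]
  have hchar : (U * A * V).charmatrix = U.map Polynomial.C * A.charmatrix * V.map Polynomial.C := by
    unfold Matrix.charmatrix
    rw [Matrix.mul_sub, Matrix.sub_mul]
    congr 1
    · rw [← ((Matrix.scalar_commute (Polynomial.X : Polynomial ℂ)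
        (fun r' => Commute.all _ _) (U.map Polynomial.C)).eq), mul_assoc, hmapUV, mul_one]
    · simp only [RingHom.mapMatrix_apply]
      rw [← Matrix.map_mul, ← Matrix.map_mul]
  rw [Matrix.charpoly, Matrix.charpoly, hchar, Matrix.det_mul, Matrix.det_mul]
  have hdet : (U.map Polynomial.C).det * (V.map Polynomial.C).det = 1 := by
    rw [← Matrix.det_mul, hmapUV, Matrix.det_one]
  calc (U.map Polynomial.C).det * (A.charmatrix).det * (V.map Polynomial.C).det
      = (A.charmatrix).det * ((U.map Polynomial.C).det * (V.map Polynomial.C).det) := by ring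
  _ = (A.charmatrix).det := by rw [hdet, mul_one]

lemma charpoly_diagonal {n : Type*} [Fintype n] [DecidableEq n] (d : n → ℂ) :
    (Matrix.diagonal d).charpoly = ∏ i, (Polynomial.X - Polynomial.C (d i)) := by
  have h : (Matrix.diagonal d).charmatrix
      = Matrix.diagonal fun i => (Polynomial.X - Polynomial.C (d i)) := by
    ext i j
    by_cases h : i = j
    · subst h
      rw [Matrix.charmatrix_apply_eq, Matrix.diagonal_apply_eq, Matrix.diagonal_apply_eq]
    · rw [Matrix.charmatrix_apply_ne _ _ _ h, Matrix.diagonal_apply_ne _ h,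
        Matrix.diagonal_apply_ne _ h, map_zero, neg_zero]
  rw [Matrix.charpoly, h, Matrix.det_diagonal]

lemma multiset_of_prod_X_sub_C {ι : Type*} [Fintype ι] (f g : ι → ℂ)
    (h : ∏ i, (Polynomial.X - Polynomial.C (f i)) = ∏ i, (Polynomial.X - Polynomial.C (g i))) :
    Multiset.map f Finset.univ.val = Multiset.map g Finset.univ.val := by
  have hf : ∀ f : ι → ℂ, (∏ i, (Polynomial.X - Polynomial.C (f i)))
      = ((Finset.univ.val.map f).map (fun a => Polynomial.X - Polynomial.C a)).prod := by
    intro f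
    rw [Multiset.map_map]
    rfl
  have h2 := congrArg Polynomial.roots ((hf f).symm.trans (h.trans (hf g)))
  rwa [Polynomial.roots_multiset_prod_X_sub_C, Polynomial.roots_multiset_prod_X_sub_C] at h2

lemma exists_comp_equiv {α β : Type*} [Fintype α] [DecidableEq α] [DecidableEq β] {f g : α → β}
    (h : Multiset.map f Finset.univ.val = Multiset.map g Finset.univ.val) :
    ∃ e : α ≃ α, ∀ a, f (e a) = g a := by
  classical
  have hcard : ∀ b : β, Fintype.card {a // g a = b} = Fintype.card {a // f a = b} := by
    intro b
    have hc := congrArg (Multiset.count b) h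
    rw [Multiset.count_map, Multiset.count_map] at hc
    rw [Fintype.card_subtype, Fintype.card_subtype]
    have e1 : ∀ f : α → β, (Finset.univ.filter fun a => f a = b).card
        = Multiset.card (Multiset.filter (fun a => b = f a) Finset.univ.val) := by
      intro f
      rw [Finset.card, Finset.filter_val]
      congr 1
      exact Multiset.filter_congr fun a _ => by constructor <;> (intro hh; exact hh.symm)
    rw [e1, e1, hc]
  refine ⟨((Equiv.sigmaFiberEquiv g).symm.trans
    ((Equiv.sigmaCongrRight fun b => Fintype.equivOfCardEq (hcard b)).trans
      (Equiv.sigmaFiberEquiv f))), fun a => ?_⟩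
  exact (Fintype.equivOfCardEq (hcard (g a)) ⟨a, rfl⟩).prop

lemma card_bits : Fintype.card (Bits N) = 2 ^ N := by
  rw [Fintype.card_fun]
  simp [ZMod.card]

end Helpers





/-- The normalized Gram matrix of the purification vectors is a density matrix whose eigenvalues
are exactly Bob's conjugate-basis error probabilities, so its von Neumann entropy equals
`H(A⊕B|b̄)`. -/
theorem sigma_eigenvalues_and_entropy {N M : ℕ} (hN : 1 ≤ N)
    (E : Bits N → Bits N → EuclideanSpace ℂ (Fin M)) (hE : Attack E)
    (σ : Matrix (Bits N) (Bits N) ℂ)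
    (hσ : σ = Matrix.of fun i j : Bits N => (2 ^ N : ℂ)⁻¹ * ⟪phi E j, phi E i⟫) :
    σ.PosSemidef
    ∧ σ.trace = 1
    ∧ (∃ (h : σ.IsHermitian) (e : Bits N ≃ Bits N), ∀ l : Bits N, h.eigenvalues (e l) = pbar E l)
    ∧ vN σ = ∑ c : Bits N, ent2 (pbar E c) := by
  classical
  have hdecomp := sigma_decomp E σ hσ
  have hDpsd : (Dmat E).PosSemidef := by
    unfold Dmat
    refine Matrix.posSemidef_diagonal_iff.mpr fun l => ?_
    rw [Complex.zero_le_real]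
    unfold pbar
    positivity
  have hpsd : σ.PosSemidef := by
    rw [hdecomp]
    exact hDpsd.mul_mul_conjTranspose_same (Umat N)
  have hherm : σ.IsHermitian := hpsd.isHermitian
  have hc : (2^N:ℂ) ≠ 0 := by positivity
  have htrace : σ.trace = 1 := by
    have hS0 : Sfun E 0 = (2^N : ℂ) := by
      unfold Sfun
      have h1 : ∀ a : Bits N, ∑ b : Bits N, ⟪E (a + 0) (b + 0), E a b⟫ = 1 := by
        intro a
        have h2 : ∀ b : Bits N, ⟪E (a + 0) (b + 0), E a b⟫ = ⟪E a b, E a b⟫ := by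
          intro b; rw [add_zero, add_zero]
        rw [Finset.sum_congr rfl fun b _ => h2 b, hE a a, if_pos rfl]
      rw [Finset.sum_congr rfl fun a _ => h1 a, Finset.sum_const, Finset.card_univ, card_bits,
        nsmul_eq_mul]
      push_cast
      ring
    have hdiag : ∀ i : Bits N, σ i i = ((2^N:ℂ)^2)⁻¹ * (2^N:ℂ) := by
      intro i
      have h0 : σ i i = (2 ^ N : ℂ)⁻¹ * ⟪phi E i, phi E i⟫ := by rw [hσ]; rfl
      rw [h0, sigma_entry, bits_add_self, hS0]
    have htr : σ.trace = ∑ i : Bits N, σ i i := rfl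
    rw [htr, Finset.sum_congr rfl fun i _ => hdiag i, Finset.sum_const, Finset.card_univ,
      card_bits, nsmul_eq_mul]
    push_cast
    field_simp
  have hcp1 : σ.charpoly = ∏ l : Bits N, (Polynomial.X - Polynomial.C ((pbar E l : ℝ) : ℂ)) := by
    rw [hdecomp, charpoly_conj_eq _ _ _ Umat_mul_conjTranspose]
    exact charpoly_diagonal _
  have hUV : (hherm.eigenvectorUnitary : Matrix (Bits N) (Bits N) ℂ)
      * star (hherm.eigenvectorUnitary : Matrix (Bits N) (Bits N) ℂ) = 1 :=
    Matrix.mem_unitaryGroup_iff.mp hherm.eigenvectorUnitary.2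
  have hcp2 : σ.charpoly
      = ∏ i : Bits N, (Polynomial.X - Polynomial.C ((hherm.eigenvalues i : ℝ) : ℂ)) := by
    conv_lhs => rw [hherm.spectral_theorem, Unitary.conjStarAlgAut_apply]
    rw [charpoly_conj_eq _ _ _ hUV, charpoly_diagonal]
    rfl
  have hms := multiset_of_prod_X_sub_C _ _ (hcp2.symm.trans hcp1)
  have hms' : Multiset.map hherm.eigenvalues Finset.univ.val
      = Multiset.map (pbar E) Finset.univ.val := by
    apply Multiset.map_injective (Complex.ofReal_injective)
    simpa [Multiset.map_map, Function.comp] using hms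
  obtain ⟨e, he⟩ := exists_comp_equiv hms'
  refine ⟨hpsd, htrace, ⟨hherm, e, he⟩, ?_⟩
  have hv : vN σ = ∑ i : Bits N, ent2 (hherm.eigenvalues i) := by
    unfold vN
    rw [dif_pos hherm]
  rw [hv, ← Equiv.sum_comp e fun i => ent2 (hherm.eigenvalues i)]
  exact Finset.sum_congr rfl fun l _ => by rw [he l]


end IDT
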